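/- Let α > 2, θ > 0, R > 0, and let M > 2/α be a real number. Let W and H be independent random variables, W distributed according to the gamma distribution with shape M and rate 1, and H exponentially distributed with rate 1. Then ∫_{ℝ²} ℙ( W·‖x‖^α ≤ H·θ·R^α ) dx = π θ^{2/α} R² · Γ(M − 2/α) Γ(1 + 2/α) / Γ(M). -/

import Mathlib

open MeasureTheory ProbabilityTheory Real Set
open scoped ENNReal

lemma gamma_moment_aux {a p : ℝ} (ha : 0 < a) (hap : 0 < a + p) :
    ∫⁻ x, ENNReal.ofReal (x ^ p) ∂(gammaMeasure a 1) =
      ENNReal.ofReal (Gamma (a + p) / Gamma a) := by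
  have hmeas : Measurable fun x : ℝ => ENNReal.ofReal (x ^ p) :=
    (measurable_id.pow_const p).ennreal_ofReal
  rw [gammaMeasure, lintegral_withDensity_eq_lintegral_mul _
    (show Measurable (gammaPDF a 1) from (measurable_gammaPDFReal a 1).ennreal_ofReal) hmeas,
    ← lintegral_add_compl _ (measurableSet_Ioi (a := (0:ℝ)))]
  have h_left : ∫⁻ x in (Ioi (0:ℝ))ᶜ,
      (gammaPDF a 1 * fun x => ENNReal.ofReal (x ^ p)) x = 0 := by
    rw [compl_Ioi, setLIntegral_congr (Iio_ae_eq_Iic (a := (0:ℝ))).symm]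
    rw [setLIntegral_congr_fun measurableSet_Iio
      (fun x (hx : x < 0) =>
        show _ = (0:ENNReal) by simp [gammaPDF_of_neg hx])]
    simp
  rw [h_left, add_zero]
  have h_congr : ∫⁻ x in Ioi (0:ℝ),
      (gammaPDF a 1 * fun x => ENNReal.ofReal (x ^ p)) x =
      ∫⁻ x in Ioi (0:ℝ), ENNReal.ofReal ((Gamma a)⁻¹ * (x ^ (a + p - 1) * exp (-(1 * x)))) := by
    refine setLIntegral_congr_fun measurableSet_Ioi (fun x (hx : 0 < x) => ?_)
    simp only [Pi.mul_apply, gammaPDF_of_nonneg hx.le]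
    rw [← ENNReal.ofReal_mul (by positivity)]
    congr 1
    rw [one_rpow, one_div, show a + p - 1 = (a - 1) + p by ring, rpow_add hx]
    ring
  rw [h_congr]
  have hint : IntegrableOn (fun x : ℝ => (Gamma a)⁻¹ * (x ^ (a + p - 1) * exp (-(1 * x))))
      (Ioi 0) := by
    refine (((Real.GammaIntegral_convergent hap).congr ?_).const_mul _ : _)
    exact ae_of_all _ fun x => by simp [mul_comm]
  rw [← ofReal_integral_eq_lintegral_ofReal hint
    ((ae_restrict_iff' measurableSet_Ioi).mpr (ae_of_all _ fun x (hx : 0 < x) => by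
      have h1 := Real.Gamma_pos_of_pos ha
      positivity))]
  rw [MeasureTheory.integral_const_mul, integral_rpow_mul_exp_neg_mul_Ioi hap one_pos]
  congr 1
  rw [one_div_one, one_rpow, one_mul, inv_mul_eq_div]

/-- Spatial contention parameter for Poisson ALOHA with Rayleigh fading and receive
beamforming with `M` antennas (equation (15)): if `W` is Gamma(M, 1) (χ² with 2M degrees of
freedom) and `H` is exponential with rate 1, independent, then
`∫_{ℝ²} ℙ(W ‖x‖^α ≤ H θ R^α) dx = π θ^(2/α) R² Γ(M - 2/α) Γ(1 + 2/α) / Γ(M)`. -/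
theorem gamma_aloha_beamforming (α θ R M : ℝ) (hα : 2 < α) (hθ : 0 < θ) (hR : 0 < R)
    (hM : 2 / α < M)
    {Ω : Type*} [MeasurableSpace Ω] (μ : Measure Ω) [IsProbabilityMeasure μ]
    (W H : Ω → ℝ) (hWmeas : Measurable W) (hHmeas : Measurable H)
    (hindep : IndepFun W H μ)
    (hW : Measure.map W μ = gammaMeasure M 1)
    (hH : Measure.map H μ = expMeasure 1) :
    ∫ x : EuclideanSpace ℝ (Fin 2),
        (μ {ω | W ω * ‖x‖ ^ α ≤ H ω * (θ * R ^ α)}).toReal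
      = π * θ ^ (2 / α) * R ^ 2 * (Gamma (M - 2 / α) * Gamma (1 + 2 / α)) / Gamma M := by
  have hα0 : (0:ℝ) < α := by linarith
  set p : ℝ := 2 / α with hp
  have hp0 : 0 < p := by positivity
  have hM0 : 0 < M := hp0.trans hM
  set s : ℝ := θ * R ^ α with hs
  have hs0 : 0 < s := mul_pos hθ (rpow_pos_of_pos hR α)
  set S : Set (EuclideanSpace ℝ (Fin 2) × Ω) :=
    {q | W q.2 * ‖q.1‖ ^ α ≤ H q.2 * s} with hSdef
  have hS : MeasurableSet S := by
    apply measurableSet_le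
    · exact (hWmeas.comp measurable_snd).mul
        ((measurable_norm.comp measurable_fst).pow_const α)
    · exact (hHmeas.comp measurable_snd).mul_const s
  -- a.e. positivity of W and nonnegativity of H
  have hWpos : ∀ᵐ ω ∂μ, 0 < W ω := by
    rw [ae_iff]
    have : {ω | ¬ 0 < W ω} = W ⁻¹' (Iic 0) := by ext ω; simp
    rw [this, ← Measure.map_apply hWmeas measurableSet_Iic, hW, gammaMeasure,
      withDensity_apply _ measurableSet_Iic,
      setLIntegral_congr (Iio_ae_eq_Iic (a := (0:ℝ))).symm,
      lintegral_gammaPDF_of_nonpos le_rfl]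
  have hHnn : ∀ᵐ ω ∂μ, 0 ≤ H ω := by
    rw [ae_iff]
    have : {ω | ¬ 0 ≤ H ω} = H ⁻¹' (Iio 0) := by ext ω; simp
    rw [this, ← Measure.map_apply hHmeas measurableSet_Iio, hH, expMeasure, gammaMeasure,
      withDensity_apply _ measurableSet_Iio, lintegral_gammaPDF_of_nonpos le_rfl]
  -- measurable ℝ≥0∞-valued moment functions
  have hφ : Measurable fun w : ℝ => ENNReal.ofReal (w ^ (-p)) :=
    (measurable_id.pow_const (-p)).ennreal_ofReal
  have hψ : Measurable fun h : ℝ => ENNReal.ofReal (h ^ p) :=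
    (measurable_id.pow_const p).ennreal_ofReal
  -- key lintegral computation
  have key : ∫⁻ x : EuclideanSpace ℝ (Fin 2), μ (Prod.mk x ⁻¹' S) =
      ENNReal.ofReal (π * s ^ p) *
        (ENNReal.ofReal (Gamma (M - p) / Gamma M) * ENNReal.ofReal (Gamma (1 + p))) := by
    have h1 : ∀ x : EuclideanSpace ℝ (Fin 2), μ (Prod.mk x ⁻¹' S) =
        ∫⁻ ω, S.indicator 1 (x, ω) ∂μ := by
      intro x
      rw [← lintegral_indicator_one (measurable_prodMk_left hS)]
      exact lintegral_congr fun ω => by by_cases h : (x, ω) ∈ S <;> simp [Set.indicator_apply, Set.mem_preimage, h]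
    simp_rw [h1]
    rw [lintegral_lintegral_swap (f := fun x ω => S.indicator 1 (x, ω))
      ((measurable_one.indicator hS).aemeasurable)]
    have h2 : ∀ᵐ ω ∂μ, (∫⁻ x : EuclideanSpace ℝ (Fin 2), S.indicator 1 (x, ω)) =
        ENNReal.ofReal (π * s ^ p) *
          (ENNReal.ofReal (W ω ^ (-p)) * ENNReal.ofReal (H ω ^ p)) := by
      filter_upwards [hWpos, hHnn] with ω hw hh
      have hsec : ∀ x : EuclideanSpace ℝ (Fin 2), S.indicator 1 (x, ω) =
          ((fun x : EuclideanSpace ℝ (Fin 2) => (x, ω)) ⁻¹' S).indicator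
            (1 : EuclideanSpace ℝ (Fin 2) → ℝ≥0∞) x := by
        intro x; by_cases h : (x, ω) ∈ S <;> simp [Set.indicator_apply, Set.mem_preimage, h]
      simp_rw [hsec]
      rw [lintegral_indicator_one (hS.preimage (measurable_prodMk_right))]
      have hball : (fun x : EuclideanSpace ℝ (Fin 2) => (x, ω)) ⁻¹' S =
          Metric.closedBall 0 ((H ω * s / W ω) ^ (1/α)) := by
        ext x
        simp only [Set.mem_preimage, hSdef, Set.mem_setOf_eq, Metric.mem_closedBall,
          dist_zero_right]
        rw [one_div, Real.le_rpow_inv_iff_of_pos (norm_nonneg x) (by positivity) hα0,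
          le_div_iff₀ hw, mul_comm]
      rw [hball, EuclideanSpace.volume_closedBall]
      have hr0 : (0:ℝ) ≤ (H ω * s / W ω) ^ (1/α) := rpow_nonneg (by positivity) _
      rw [show (Fintype.card (Fin 2)) = 2 from Fintype.card_fin 2,
        ← ENNReal.ofReal_pow hr0,
        ← ENNReal.ofReal_mul (by positivity),
        ← ENNReal.ofReal_mul (rpow_nonneg hw.le _),
        ← ENNReal.ofReal_mul (mul_nonneg pi_nonneg (rpow_nonneg hs0.le _))]
      congr 1
      have hsq : ((H ω * s / W ω) ^ (1/α)) ^ (2:ℕ) = (H ω * s / W ω) ^ p := by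
        rw [← rpow_natCast ((H ω * s / W ω) ^ (1/α)) 2, ← rpow_mul (by positivity), hp]
        congr 1
        push_cast
        ring
      have hG : Real.sqrt π ^ (2:ℕ) / Gamma (((2:ℕ):ℝ) / 2 + 1) = π := by
        norm_num [Real.Gamma_two, Real.sq_sqrt pi_nonneg]
      rw [hsq, hG, div_rpow (by positivity) hw.le, mul_rpow hh hs0.le, rpow_neg hw.le,
        div_eq_mul_inv]
      ring
    rw [lintegral_congr_ae h2]
    rw [lintegral_const_mul (μ := μ)
      (f := fun ω => ENNReal.ofReal (W ω ^ (-p)) * ENNReal.ofReal (H ω ^ p)) _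
      (by exact (hφ.comp hWmeas).mul (hψ.comp hHmeas))]
    have hmul : ∫⁻ ω, ENNReal.ofReal (W ω ^ (-p)) * ENNReal.ofReal (H ω ^ p) ∂μ =
        (∫⁻ ω, ENNReal.ofReal (W ω ^ (-p)) ∂μ) * ∫⁻ ω, ENNReal.ofReal (H ω ^ p) ∂μ :=
      lintegral_mul_eq_lintegral_mul_lintegral_of_indepFun (hφ.comp hWmeas) (hψ.comp hHmeas)
        (hindep.comp hφ hψ)
    rw [hmul]
    have hWm : ∫⁻ ω, ENNReal.ofReal (W ω ^ (-p)) ∂μ = ENNReal.ofReal (Gamma (M - p) / Gamma M) := by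
      rw [← lintegral_map hφ hWmeas, hW, gamma_moment_aux hM0 (by linarith : 0 < M + -p),
        ← sub_eq_add_neg]
    have hHm : ∫⁻ ω, ENNReal.ofReal (H ω ^ p) ∂μ = ENNReal.ofReal (Gamma (1 + p)) := by
      rw [← lintegral_map hψ hHmeas, hH, expMeasure, gamma_moment_aux one_pos (by linarith),
        Real.Gamma_one, div_one]
    rw [hWm, hHm]
  -- convert Bochner integral to lintegral
  have hmeasF : Measurable fun x : EuclideanSpace ℝ (Fin 2) => μ (Prod.mk x ⁻¹' S) :=
    measurable_measure_prodMk_left hS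
  have hfin : ∀ᵐ x : EuclideanSpace ℝ (Fin 2), μ (Prod.mk x ⁻¹' S) < ⊤ :=
    ae_of_all _ fun x => measure_lt_top _ _
  have hLHS : ∫ x : EuclideanSpace ℝ (Fin 2),
      (μ {ω | W ω * ‖x‖ ^ α ≤ H ω * s}).toReal
      = (∫⁻ x : EuclideanSpace ℝ (Fin 2), μ (Prod.mk x ⁻¹' S)).toReal :=
    integral_toReal hmeasF.aemeasurable hfin
  rw [hLHS, key]
  rw [ENNReal.toReal_mul, ENNReal.toReal_mul,
    ENNReal.toReal_ofReal (mul_nonneg pi_nonneg (rpow_nonneg hs0.le _)),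
    ENNReal.toReal_ofReal (div_nonneg (Real.Gamma_nonneg_of_nonneg (by linarith))
      (Real.Gamma_nonneg_of_nonneg hM0.le)),
    ENNReal.toReal_ofReal (Real.Gamma_nonneg_of_nonneg (by positivity))]
  have hsp : s ^ p = θ ^ p * R ^ 2 := by
    have hap : α * p = 2 := by rw [hp]; field_simp
    rw [hs, mul_rpow hθ.le (rpow_nonneg hR.le _), ← rpow_natCast R 2, ← rpow_mul hR.le, hap]
    norm_num
  rw [hsp]
  have hΓM : Gamma M ≠ 0 := (Real.Gamma_pos_of_pos hM0).ne'
  ring
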